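/- Let H be a real Hilbert space, u ∈ H, and let K ⊆ K' be closed subspaces of H with orthogonal projections P_K and P_{K'}. Let g ∈ K' with g ∉ K, so that g − P_K g ≠ 0. Then ‖u − P_{K'} u‖² ≤ ‖u − P_K u‖² − ⟨u − P_K u, g − P_K g⟩² / ‖g − P_K g‖². -/

import Mathlib

open RealInnerProductSpace

/-- Per-iteration error-reduction inequality of the orthogonal greedy algorithm:
for nested closed subspaces `K ≤ K'` and `g ∈ K'` with `g ∉ K`,
`‖u - P_{K'} u‖² ≤ ‖u - P_K u‖² - ⟨u - P_K u, g - P_K g⟩² / ‖g - P_K g‖²`. -/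
theorem stmt14 {H : Type*} [NormedAddCommGroup H] [InnerProductSpace ℝ H] [CompleteSpace H]
    (u : H) (K K' : Submodule ℝ H)
    [Submodule.HasOrthogonalProjection K] [Submodule.HasOrthogonalProjection K']
    (hKK' : K ≤ K') (g : H) (hgK' : g ∈ K') (hgK : g ∉ K) :
    ‖u - (K'.orthogonalProjectionOnto u : H)‖ ^ 2 ≤
      ‖u - (K.orthogonalProjectionOnto u : H)‖ ^ 2 -
        ⟪u - (K.orthogonalProjectionOnto u : H), g - (K.orthogonalProjectionOnto g : H)⟫ ^ 2 /
          ‖g - (K.orthogonalProjectionOnto g : H)‖ ^ 2 := by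
  set r : H := u - (K.orthogonalProjectionOnto u : H) with hr
  set h : H := g - (K.orthogonalProjectionOnto g : H) with hh
  have hh0 : h ≠ 0 := by
    intro h0
    apply hgK
    have : g = (K.orthogonalProjectionOnto g : H) := by
      have := sub_eq_zero.mp h0
      exact this
    rw [this]; exact (K.orthogonalProjectionOnto g).2
  have hhn : ‖h‖ ^ 2 ≠ 0 := pow_ne_zero _ (norm_ne_zero_iff.mpr hh0)
  set c : ℝ := ⟪r, h⟫ / ‖h‖ ^ 2 with hc
  -- candidate point in K'
  have hv : (K.orthogonalProjectionOnto u : H) + c • h ∈ K' := by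
    apply K'.add_mem (hKK' (K.orthogonalProjectionOnto u).2)
    exact K'.smul_mem _ (K'.sub_mem hgK' (hKK' (K.orthogonalProjectionOnto g).2))
  have hmin : ‖u - (K'.orthogonalProjectionOnto u : H)‖ ≤
      ‖u - ((K.orthogonalProjectionOnto u : H) + c • h)‖ := by
    rw [← Submodule.starProjection_apply, Submodule.starProjection_minimal]
    exact ciInf_le ⟨0, fun x => by rintro ⟨y, rfl⟩; positivity⟩
      (⟨_, hv⟩ : K')
  have key : ‖u - ((K.orthogonalProjectionOnto u : H) + c • h)‖ ^ 2 =
      ‖r‖ ^ 2 - ⟪r, h⟫ ^ 2 / ‖h‖ ^ 2 := by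
    have : u - ((K.orthogonalProjectionOnto u : H) + c • h) = r - c • h := by
      rw [hr]; abel
    rw [this, @norm_sub_sq_real, real_inner_smul_right, norm_smul,
      mul_pow, Real.norm_eq_abs, sq_abs, hc]
    field_simp
    ring
  calc ‖u - (K'.orthogonalProjectionOnto u : H)‖ ^ 2
      ≤ ‖u - ((K.orthogonalProjectionOnto u : H) + c • h)‖ ^ 2 := by
        gcongr
    _ = ‖r‖ ^ 2 - ⟪r, h⟫ ^ 2 / ‖h‖ ^ 2 := key
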